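/- arXiv:1912.08045 — 4 statements merged into one kernel-verified Lean document; each statement's English description precedes it below -/
import Mathlib

section
/- Let s ≥ 2 and n ≥ 1 be natural numbers and set h = ⌊n/2⌋. Let X' be a subset of the digit positions {0,…,h−1} and Y' a subset of the positions {h,…,n−1}. Then there exist a natural number b < s^n and a fixed choice of digits c : ({0,…,n−1} \ X') → {0,…,s−1} such that, writing A_φ = Σ_{i∈X'} φ(i)·sⁱ + Σ_{i∈{0,…,n−1}\X'} c(i)·sⁱ for each assignment φ : X' → {0,…,s−1}, the number N of distinct tuples ( ((A_φ·b)/sⁱ) mod s )_{i∈Y'}, as φ ranges over all s^{|X'|} assignments, satisfies N^n ≥ s^{|X'|·|Y'|}. -/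
open Finset

lemma geo (s x : ℕ) (hs : 1 ≤ s) : ∑ j ∈ range x, (s - 1) * s ^ j = s ^ x - 1 := by
  induction x with
  | zero => simp
  | succ k ih =>
    rw [Finset.sum_range_succ, ih]
    have h1 : 1 ≤ s ^ k := Nat.one_le_pow _ _ hs
    have h2 : s ^ k ≤ s ^ (k+1) := Nat.pow_le_pow_right hs (by omega)
    have : (s - 1) * s ^ k = s ^ (k+1) - s ^ k := by
      rw [Nat.sub_mul, one_mul, pow_succ, mul_comm]
    omega

lemma low_lt (s x : ℕ) (hs : 1 ≤ s) (T : Finset ℕ) (f : ℕ → ℕ)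
    (hT : ∀ j ∈ T, j < x) (hf : ∀ j ∈ T, f j < s) :
    ∑ j ∈ T, f j * s ^ j < s ^ x := by
  have h1 : ∑ j ∈ T, f j * s ^ j ≤ ∑ j ∈ T, (s - 1) * s ^ j := by
    apply Finset.sum_le_sum
    intro j hj
    exact Nat.mul_le_mul_right _ (by have := hf j hj; omega)
  have h2 : ∑ j ∈ T, (s - 1) * s ^ j ≤ ∑ j ∈ range x, (s - 1) * s ^ j := by
    apply Finset.sum_le_sum_of_subset
    intro j hj; exact Finset.mem_range.mpr (hT j hj)
  rw [geo s x hs] at h2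
  have : 1 ≤ s ^ x := Nat.one_le_pow _ _ hs
  omega

lemma digit (s x : ℕ) (hs : 2 ≤ s) (T : Finset ℕ) (f : ℕ → ℕ)
    (hx : x ∈ T) (hf : ∀ j ∈ T, f j < s) :
    (∑ j ∈ T, f j * s ^ j) / s ^ x % s = f x := by
  have hs1 : 1 ≤ s := by omega
  classical
  have hsplit : ∑ j ∈ T, f j * s ^ j
      = f x * s ^ x + ∑ j ∈ T.erase x, f j * s ^ j := by
    rw [← Finset.sum_erase_add T _ hx]; ring
  set L := ∑ j ∈ (T.erase x).filter (· < x), f j * s ^ j with hL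
  set Hi := (T.erase x).filter (fun j => ¬ j < x) with hHi
  have hsplit2 : ∑ j ∈ T.erase x, f j * s ^ j
      = L + ∑ j ∈ Hi, f j * s ^ j := by
    rw [hL, hHi, Finset.sum_filter_add_sum_filter_not]
  have hHiEq : ∑ j ∈ Hi, f j * s ^ j
      = (∑ j ∈ Hi, f j * s ^ (j - (x+1))) * (s * s ^ x) := by
    rw [Finset.sum_mul]
    apply Finset.sum_congr rfl
    intro j hj
    have hj' : x < j := by
      simp only [hHi, Finset.mem_filter, Finset.mem_erase] at hj
      omega
    have : j - (x+1) + (x+1) = j := by omega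
    calc f j * s ^ j = f j * s ^ (j - (x+1) + (x+1)) := by rw [this]
      _ = f j * s ^ (j - (x+1)) * (s * s ^ x) := by rw [pow_add, pow_succ]; ring
  set H := ∑ j ∈ Hi, f j * s ^ (j - (x+1)) with hH
  have hLlt : L < s ^ x := by
    apply low_lt s x hs1 _ _ _ (fun j hj => hf j (Finset.mem_of_mem_erase (Finset.mem_of_mem_filter j hj)))
    intro j hj
    exact (Finset.mem_filter.mp hj).2
  have key : ∑ j ∈ T, f j * s ^ j = L + (f x + s * H) * s ^ x := by
    rw [hsplit, hsplit2, hHiEq]; ring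
  rw [key]
  have hpos : 0 < s ^ x := Nat.pow_pos (by omega)
  rw [Nat.add_mul_div_right _ _ hpos, Nat.div_eq_of_lt hLlt, zero_add,
    Nat.add_mul_mod_self_left, Nat.mod_eq_of_lt (hf x hx)]

lemma avg (n : ℕ) (hn : 1 ≤ n) (X' Y' : Finset ℕ) (hX : X' ⊆ Finset.range (n / 2))
    (hY : Y' ⊆ Finset.Ico (n / 2) n) :
    ∃ t < n, X'.card * Y'.card ≤ n * (X'.filter (fun x => x + t ∈ Y')).card := by
  classical
  have key : ∑ t ∈ range n, (X'.filter (fun x => x + t ∈ Y')).card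
      = X'.card * Y'.card := by
    have h1 : ∀ t, (X'.filter (fun x => x + t ∈ Y')).card
        = ∑ x ∈ X', if x + t ∈ Y' then 1 else 0 := by
      intro t; rw [Finset.card_filter]
    simp only [h1]
    rw [Finset.sum_comm]
    have h2 : ∀ x ∈ X', (∑ t ∈ range n, if x + t ∈ Y' then 1 else 0) = Y'.card := by
      intro x hx
      have hxlt : x < n / 2 := Finset.mem_range.mp (hX hx)
      rw [← Finset.card_filter]
      apply Finset.card_bij (fun t _ => x + t)
      · intro t ht; exact (Finset.mem_filter.mp ht).2
      · intro a ha b hb hab; omega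
      · intro y hy
        have hy' := Finset.mem_Ico.mp (hY hy)
        refine ⟨y - x, Finset.mem_filter.mpr ⟨Finset.mem_range.mpr (by omega), ?_⟩, by omega⟩
        have : x + (y - x) = y := by omega
        rw [this]; exact hy
    rw [Finset.sum_congr rfl h2, Finset.sum_const, smul_eq_mul]
  have hne : (range n).Nonempty := ⟨0, Finset.mem_range.mpr hn⟩
  have := Finset.exists_le_of_sum_le hne (f := fun _ => X'.card * Y'.card)
    (g := fun t => n * (X'.filter (fun x => x + t ∈ Y')).card)
    (by rw [Finset.sum_const, Finset.card_range, smul_eq_mul, ← Finset.mul_sum, key])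
  obtain ⟨t, ht, h⟩ := this
  exact ⟨t, Finset.mem_range.mp ht, h⟩

/-- Counting (partial Grigoriev's flow) form of the dominator-set lemma for integer
multiplication: one can fix the second factor `b` and the digits of the first factor
outside `X'` so that the digits of the product in positions `Y'` take at least
`s^(|X'|·|Y'|/n)` distinct values as the digits in positions `X'` vary. -/
theorem stmt_0 (s n : ℕ) (hs : 2 ≤ s) (hn : 1 ≤ n)
    (X' Y' : Finset ℕ) (hX : X' ⊆ Finset.range (n / 2))
    (hY : Y' ⊆ Finset.Ico (n / 2) n) :
    ∃ b : ℕ, b < s ^ n ∧ ∃ c : ℕ → ℕ, (∀ i ∈ Finset.range n \ X', c i < s) ∧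
      ((Finset.univ : Finset ({x // x ∈ X'} → Fin s)).image
          (fun φ : {x // x ∈ X'} → Fin s =>
            fun i : {y // y ∈ Y'} =>
              (((∑ j ∈ X'.attach, (φ j : ℕ) * s ^ (j : ℕ)) +
                  ∑ j ∈ Finset.range n \ X', c j * s ^ j) * b / s ^ (i : ℕ)) % s)).card
        ^ n ≥ s ^ (X'.card * Y'.card) := by
  classical
  obtain ⟨t, htn, hcount⟩ := avg n hn X' Y' hX hY
  set S := X'.filter (fun x => x + t ∈ Y') with hS
  refine ⟨s ^ t, Nat.pow_lt_pow_right (by omega) htn, fun _ => 0, fun i _ => by simpa using Nat.lt_of_lt_of_le Nat.zero_lt_two hs, ?_⟩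
  simp only [zero_mul, Finset.sum_const_zero, add_zero]
  set F : ({x // x ∈ X'} → Fin s) → ({y // y ∈ Y'} → ℕ) :=
    fun φ i => ((∑ j ∈ X'.attach, (φ j : ℕ) * s ^ (j : ℕ)) * s ^ t / s ^ (i : ℕ)) % s
    with hF
  -- evaluation lemma
  have heval : ∀ (φ : {x // x ∈ X'} → Fin s) (x : ℕ) (hx : x ∈ X')
      (hxy : x + t ∈ Y'), F φ ⟨x + t, hxy⟩ = (φ ⟨x, hx⟩ : ℕ) := by
    intro φ x hx hxy
    set f : ℕ → ℕ := fun j => if h : j ∈ X' then (φ ⟨j, h⟩ : ℕ) else 0 with hf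
    have hA : ∑ j ∈ X'.attach, (φ j : ℕ) * s ^ (j : ℕ)
        = ∑ j ∈ X', f j * s ^ j := by
      rw [← Finset.sum_attach X' (fun j => f j * s ^ j)]
      apply Finset.sum_congr rfl
      intro j _
      simp [hf, j.2]
    have hdiv : (∑ j ∈ X', f j * s ^ j) * s ^ t / s ^ (x + t)
        = (∑ j ∈ X', f j * s ^ j) / s ^ x := by
      rw [pow_add]
      exact Nat.mul_div_mul_right _ _ (Nat.pow_pos (by omega))
    have hflt : ∀ j ∈ X', f j < s := by
      intro j hj
      simp only [hf, dif_pos hj]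
      exact (φ ⟨j, hj⟩).2
    have := digit s x hs X' f hx hflt
    simp only [hF]; rw [hA, hdiv, this]; simp only [hf, dif_pos hx]
  -- the extension map
  set E : ({x // x ∈ S} → Fin s) → ({x // x ∈ X'} → Fin s) :=
    fun ψ j => if h : (j : ℕ) ∈ S then ψ ⟨j, h⟩ else ⟨0, by omega⟩ with hE
  have hinj : Function.Injective (F ∘ E) := by
    intro ψ₁ ψ₂ hψ
    funext x
    obtain ⟨hx1, hx2⟩ := Finset.mem_filter.mp x.2
    have h1 := heval (E ψ₁) x hx1 hx2
    have h2 := heval (E ψ₂) x hx1 hx2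
    have := congrFun hψ ⟨(x : ℕ) + t, hx2⟩
    simp only [Function.comp_apply] at this
    rw [h1, h2] at this
    have hx : ((x : ℕ)) ∈ S := x.2
    simp only [hE, dif_pos hx] at this
    exact Fin.val_injective this
  have hcard1 : ((Finset.univ : Finset ({x // x ∈ S} → Fin s)).image (F ∘ E)).card
      = s ^ S.card := by
    rw [Finset.card_image_of_injective _ hinj, Finset.card_univ, Fintype.card_fun,
      Fintype.card_coe, Fintype.card_fin]
  have hsub : ((Finset.univ : Finset ({x // x ∈ S} → Fin s)).image (F ∘ E))
      ⊆ (Finset.univ : Finset ({x // x ∈ X'} → Fin s)).image F := by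
    intro y hy
    obtain ⟨ψ, _, rfl⟩ := Finset.mem_image.mp hy
    exact Finset.mem_image.mpr ⟨E ψ, Finset.mem_univ _, rfl⟩
  have hge : s ^ S.card ≤ ((Finset.univ : Finset ({x // x ∈ X'} → Fin s)).image F).card := by
    rw [← hcard1]; exact Finset.card_le_card hsub
  calc s ^ (X'.card * Y'.card) ≤ s ^ (n * S.card) :=
        Nat.pow_le_pow_right (by omega) hcount
    _ = (s ^ S.card) ^ n := by rw [mul_comm, pow_mul]
    _ ≤ ((Finset.univ : Finset ({x // x ∈ X'} → Fin s)).image F).card ^ n :=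
        Nat.pow_le_pow_left hge n
end

section
/- Let s ≥ 2 and n ≥ 1 be natural numbers, set h = ⌊n/2⌋, let X' ⊆ {0,…,h−1}, Y' ⊆ {h,…,n−1}, and let d be a natural number. Suppose that for every natural number b < s^n and every fixing c : ({0,…,n−1}\X') → {0,…,s−1} of the remaining digit positions there exist functions H : ({0,…,s−1}^{X'}) → ({0,…,s−1}^d) and G : ({0,…,s−1}^d) → ({0,…,s−1}^{Y'}) such that for every assignment φ : X' → {0,…,s−1}, G(H(φ)) equals the tuple of base-s digits of A_φ·b in positions Y', where A_φ = Σ_{i∈X'} φ(i)·sⁱ + Σ_{i∈{0,…,n−1}\X'} c(i)·sⁱ. Then n·d ≥ |X'|·|Y'|. -/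
open Finset

lemma geom_aux (s : ℕ) (hs : 1 ≤ s) (x : ℕ) :
    ∑ j ∈ Finset.range x, (s - 1) * s ^ j = s ^ x - 1 := by
  induction x with
  | zero => simp
  | succ m ih =>
    rw [Finset.sum_range_succ, ih]
    have h1 : 1 ≤ s ^ m := Nat.one_le_pow _ _ hs
    have h2 : s ^ m ≤ s ^ (m + 1) := Nat.pow_le_pow_right hs (by omega)
    have h3 : (s - 1) * s ^ m = s ^ (m + 1) - s ^ m := by
      rw [Nat.sub_mul, one_mul, ← pow_succ']
    omega

lemma digit_extract (s : ℕ) (hs : 2 ≤ s) (S : Finset ℕ) (f : ℕ → ℕ)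
    (hf : ∀ j ∈ S, f j < s) (x : ℕ) (hx : x ∈ S) :
    (∑ j ∈ S, f j * s ^ j) / s ^ x % s = f x := by
  have hxpos : 0 < s ^ x := Nat.pow_pos (by omega)
  have hsplit0 : f x * s ^ x + ∑ j ∈ S.erase x, f j * s ^ j = ∑ j ∈ S, f j * s ^ j :=
    Finset.add_sum_erase S (fun j => f j * s ^ j) hx
  have hsplit1 : ∑ j ∈ S.erase x, f j * s ^ j =
      (∑ j ∈ (S.erase x).filter (fun j => j < x), f j * s ^ j) +
      (∑ j ∈ (S.erase x).filter (fun j => ¬ j < x), f j * s ^ j) :=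
    (Finset.sum_filter_add_sum_filter_not _ _ _).symm
  set L := ∑ j ∈ (S.erase x).filter (fun j => j < x), f j * s ^ j with hL
  have hLlt : L < s ^ x := by
    have h1 : L ≤ ∑ j ∈ (S.erase x).filter (fun j => j < x), (s - 1) * s ^ j := by
      apply Finset.sum_le_sum
      intro j hj
      have : f j < s := hf j (Finset.mem_of_mem_erase (Finset.mem_filter.mp hj).1)
      exact Nat.mul_le_mul_right _ (by omega)
    have h2 : ∑ j ∈ (S.erase x).filter (fun j => j < x), (s - 1) * s ^ j ≤
        ∑ j ∈ Finset.range x, (s - 1) * s ^ j := by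
      apply Finset.sum_le_sum_of_subset
      intro j hj
      exact Finset.mem_range.mpr (Finset.mem_filter.mp hj).2
    rw [geom_aux s (by omega) x] at h2
    omega
  have hHdvd : s ^ (x + 1) ∣ ∑ j ∈ (S.erase x).filter (fun j => ¬ j < x), f j * s ^ j := by
    apply Finset.dvd_sum
    intro j hj
    have hj1 : j ≠ x := Finset.ne_of_mem_erase (Finset.mem_filter.mp hj).1
    have hj2 : ¬ j < x := (Finset.mem_filter.mp hj).2
    exact Dvd.dvd.mul_left (pow_dvd_pow s (by omega)) _
  obtain ⟨M, hM⟩ := hHdvd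
  have htot : ∑ j ∈ S, f j * s ^ j = L + s ^ x * (f x + s * M) := by
    rw [← hsplit0, hsplit1, hM]
    ring
  rw [htot, Nat.add_mul_div_left _ _ hxpos, Nat.div_eq_of_lt hLlt, zero_add,
    Nat.add_mul_mod_self_left, Nat.mod_eq_of_lt (hf x hx)]


/-- Information-flow form of the dominator-set lemma for integer multiplication:
if for every choice of the second factor `b` and every fixing `c` of the digits
outside `X'` the tuple of base-`s` digits of `A_φ·b` in positions `Y'` can be
computed from `d` intermediate base-`s` digits (i.e. factors through
`{0,…,s−1}^d`), then `n·d ≥ |X'|·|Y'|`. -/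
theorem stmt_1 (s n d : ℕ) (hs : 2 ≤ s) (hn : 1 ≤ n)
    (X' Y' : Finset ℕ) (hX : X' ⊆ Finset.range (n / 2))
    (hY : Y' ⊆ Finset.Ico (n / 2) n)
    (hdom : ∀ b : ℕ, b < s ^ n → ∀ c : ℕ → ℕ, (∀ i ∈ Finset.range n \ X', c i < s) →
      ∃ H : ({x // x ∈ X'} → Fin s) → (Fin d → Fin s),
      ∃ G : (Fin d → Fin s) → ({y // y ∈ Y'} → ℕ),
        ∀ φ : {x // x ∈ X'} → Fin s, ∀ i : {y // y ∈ Y'},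
          G (H φ) i =
            (((∑ j ∈ X'.attach, (φ j : ℕ) * s ^ (j : ℕ)) +
                ∑ j ∈ Finset.range n \ X', c j * s ^ j) * b / s ^ (i : ℕ)) % s) :
    X'.card * Y'.card ≤ n * d := by
  have stepA : ∀ k ∈ Finset.range n, (X'.filter (fun x => x + k ∈ Y')).card ≤ d := by
    intro k hk
    rw [Finset.mem_range] at hk
    have hb : s ^ k < s ^ n := Nat.pow_lt_pow_right (by omega) hk
    obtain ⟨H, G, hHG⟩ := hdom (s ^ k) hb (fun _ => 0) (fun i _ => by show 0 < s; omega)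
    set T := X'.filter (fun x => x + k ∈ Y') with hT
    have key : ∀ ψ : {x // x ∈ T} → Fin s, ∀ x : {x // x ∈ T},
        (ψ x : ℕ) = G (H (fun j => if h : (j : ℕ) + k ∈ Y' then
            ψ ⟨j, Finset.mem_filter.mpr ⟨j.2, h⟩⟩ else ⟨0, by omega⟩))
          ⟨(x : ℕ) + k, (Finset.mem_filter.mp x.2).2⟩ := by
      intro ψ x
      set φ : {x // x ∈ X'} → Fin s := fun j => if h : (j : ℕ) + k ∈ Y' then
            ψ ⟨j, Finset.mem_filter.mpr ⟨j.2, h⟩⟩ else ⟨0, by omega⟩ with hφ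
      have hx1 : (x : ℕ) ∈ X' := (Finset.mem_filter.mp x.2).1
      rw [hHG φ ⟨(x : ℕ) + k, (Finset.mem_filter.mp x.2).2⟩]
      simp only [zero_mul, Finset.sum_const_zero, add_zero]
      set f : ℕ → ℕ := fun m => if h : m ∈ T then (ψ ⟨m, h⟩ : ℕ) else 0 with hf
      have hsum : ∑ j ∈ X'.attach, (φ j : ℕ) * s ^ (j : ℕ) = ∑ j ∈ X', f j * s ^ j := by
        rw [← Finset.sum_attach X' (fun j => f j * s ^ j)]
        apply Finset.sum_congr rfl
        intro j _
        congr 1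
        by_cases h : (j : ℕ) + k ∈ Y'
        · simp [hφ, hf, hT, Finset.mem_filter, j.2, h]
        · simp [hφ, hf, hT, Finset.mem_filter, h]
      rw [hsum]
      have hdiv : (∑ j ∈ X', f j * s ^ j) * s ^ k / s ^ ((x : ℕ) + k)
          = (∑ j ∈ X', f j * s ^ j) / s ^ (x : ℕ) := by
        rw [pow_add]
        exact Nat.mul_div_mul_right _ _ (Nat.pow_pos (by omega))
      rw [hdiv]
      have hfb : ∀ j ∈ X', f j < s := by
        intro j _
        rw [hf]
        simp only
        split
        · exact (ψ _).isLt
        · omega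
      rw [digit_extract s hs X' f hfb _ hx1, hf]
      simp only
      rw [dif_pos x.2]
    have hinj : Function.Injective (fun ψ : {x // x ∈ T} → Fin s =>
        H (fun j => if h : (j : ℕ) + k ∈ Y' then
            ψ ⟨j, Finset.mem_filter.mpr ⟨j.2, h⟩⟩ else ⟨0, by omega⟩)) := by
      intro ψ1 ψ2 hE
      simp only at hE
      funext x
      have h1 := key ψ1 x
      have h2 := key ψ2 x
      rw [hE] at h1
      exact Fin.val_injective (h1.trans h2.symm)
    have hcard := Fintype.card_le_of_injective _ hinj
    simp only [Fintype.card_fun, Fintype.card_coe, Fintype.card_fin] at hcard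
    exact (Nat.pow_le_pow_iff_right (by omega : 1 < s)).mp hcard
  have stepB : ∑ k ∈ Finset.range n, (X'.filter (fun x => x + k ∈ Y')).card
      = X'.card * Y'.card := by
    have h1 : ∀ k, (X'.filter (fun x => x + k ∈ Y')).card
        = ∑ x ∈ X', if x + k ∈ Y' then 1 else 0 := fun k => Finset.card_filter _ _
    simp only [h1]
    rw [Finset.sum_comm]
    have h2 : ∀ x ∈ X', (∑ k ∈ Finset.range n, if x + k ∈ Y' then 1 else 0) = Y'.card := by
      intro x hx
      rw [← Finset.card_filter]
      have hxlt : x < n / 2 := Finset.mem_range.mp (hX hx)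
      apply Finset.card_bij' (fun k _ => x + k) (fun y _ => y - x)
      · intro k hk
        exact (Finset.mem_filter.mp hk).2
      · intro y hy
        have h := Finset.mem_Ico.mp (hY hy)
        refine Finset.mem_filter.mpr ⟨Finset.mem_range.mpr (by omega), ?_⟩
        have hxy : x + (y - x) = y := by omega
        rw [hxy]
        exact hy
      · intro k hk
        omega
      · intro y hy
        have h := Finset.mem_Ico.mp (hY hy)
        omega
    rw [Finset.sum_congr rfl h2, Finset.sum_const, smul_eq_mul]
  calc X'.card * Y'.card
      = ∑ k ∈ Finset.range n, (X'.filter (fun x => x + k ∈ Y')).card := stepB.symm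
    _ ≤ ∑ k ∈ Finset.range n, d := Finset.sum_le_sum stepA
    _ = n * d := by rw [Finset.sum_const, Finset.card_range, smul_eq_mul]
end

section
/- Let s ≥ 2 and n ≥ 1 be natural numbers, T' a finite set of pairs (j,k) with j < n and k < n, J_A and J_B the sets of first and second coordinates occurring in T', and d a natural number. Suppose there exist functions H : ({0,…,s−1}^n × {0,…,s−1}^n) → {0,…,s−1}^d and G : {0,…,s−1}^d → (T' → ℕ) such that for all digit assignments a, b : {0,…,n−1} → {0,…,s−1}, G(H(a,b)) equals the tuple ((j,k) ↦ a(j)·b(k)) of elementary products indexed by T'. Then d ≥ max(|J_A|, |J_B|). -/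
/-- Information-flow form of Lemma `domtype3`: if the tuple of elementary products
`A[j]·B[k]` indexed by `T'` factors through `d` intermediate values each stored as one
base-`s` digit, then `d ≥ max(|J_A|, |J_B|)`, where `J_A` (resp. `J_B`) is the set of
first (resp. second) coordinates occurring in `T'`. -/
theorem stmt_8 (s n d : ℕ) (hs : 2 ≤ s) (hn : 1 ≤ n) (T' : Finset (ℕ × ℕ))
    (hT' : ∀ p ∈ T', p.1 < n ∧ p.2 < n)
    (H : (Fin n → Fin s) × (Fin n → Fin s) → (Fin d → Fin s))
    (G : (Fin d → Fin s) → ({x // x ∈ T'} → ℕ))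
    (hGH : ∀ a b : Fin n → Fin s, ∀ p : {x // x ∈ T'},
      G (H (a, b)) p =
        (a ⟨p.1.1, (hT' p.1 p.2).1⟩ : ℕ) * (b ⟨p.1.2, (hT' p.1 p.2).2⟩ : ℕ)) :
    max (T'.image Prod.fst).card (T'.image Prod.snd).card ≤ d := by
  have hs1 : 1 < s := hs
  set one : Fin s := ⟨1, hs1⟩ with hone
  have honeval : (one : ℕ) = 1 := rfl
  -- helper: card inequality from injectivity
  have cardle : ∀ (J : Finset ℕ),
      (∃ φ : (↥J → Fin s) → (Fin d → Fin s), Function.Injective φ) → J.card ≤ d := by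
    intro J ⟨φ, hφ⟩
    have h := Fintype.card_le_of_injective φ hφ
    simp only [Fintype.card_fun, Fintype.card_fin, Fintype.card_coe] at h
    exact (Nat.pow_le_pow_iff_right hs1).mp h
  apply max_le
  · apply cardle
    refine ⟨fun v => H (fun i => if h : (i : ℕ) ∈ T'.image Prod.fst then v ⟨i, h⟩ else ⟨0, Nat.lt_of_lt_of_le Nat.zero_lt_two hs⟩,
      fun _ => one), ?_⟩
    intro v v' hvv'
    funext j
    obtain ⟨jv, hj⟩ := j
    obtain ⟨p, hp, hpj⟩ := Finset.mem_image.mp hj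
    have hj1 : p.1 < n := (hT' p hp).1
    have h1 := hGH (fun i => if h : (i : ℕ) ∈ T'.image Prod.fst then v ⟨i, h⟩ else ⟨0, Nat.lt_of_lt_of_le Nat.zero_lt_two hs⟩)
      (fun _ => one) ⟨p, hp⟩
    have h2 := hGH (fun i => if h : (i : ℕ) ∈ T'.image Prod.fst then v' ⟨i, h⟩ else ⟨0, Nat.lt_of_lt_of_le Nat.zero_lt_two hs⟩)
      (fun _ => one) ⟨p, hp⟩
    beta_reduce at hvv'
    rw [hvv'] at h1
    have := h1.symm.trans h2
    simp only [honeval, mul_one] at this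
    have hmem : ((⟨p.1, hj1⟩ : Fin n) : ℕ) ∈ T'.image Prod.fst := by
      simpa using Finset.mem_image_of_mem Prod.fst hp
    rw [dif_pos hmem, dif_pos hmem] at this
    have hv : v ⟨p.1, hmem⟩ = v' ⟨p.1, hmem⟩ := Fin.ext this
    subst hpj
    exact hv
  · apply cardle
    refine ⟨fun v => H (fun _ => one,
      fun i => if h : (i : ℕ) ∈ T'.image Prod.snd then v ⟨i, h⟩ else ⟨0, Nat.lt_of_lt_of_le Nat.zero_lt_two hs⟩), ?_⟩
    intro v v' hvv'
    funext j
    obtain ⟨jv, hj⟩ := j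
    obtain ⟨p, hp, hpj⟩ := Finset.mem_image.mp hj
    have hj2 : p.2 < n := (hT' p hp).2
    have h1 := hGH (fun _ => one)
      (fun i => if h : (i : ℕ) ∈ T'.image Prod.snd then v ⟨i, h⟩ else ⟨0, Nat.lt_of_lt_of_le Nat.zero_lt_two hs⟩) ⟨p, hp⟩
    have h2 := hGH (fun _ => one)
      (fun i => if h : (i : ℕ) ∈ T'.image Prod.snd then v' ⟨i, h⟩ else ⟨0, Nat.lt_of_lt_of_le Nat.zero_lt_two hs⟩) ⟨p, hp⟩
    beta_reduce at hvv'
    rw [hvv'] at h1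
    have := h1.symm.trans h2
    simp only [honeval, one_mul] at this
    have hmem : ((⟨p.2, hj2⟩ : Fin n) : ℕ) ∈ T'.image Prod.snd := by
      simpa using Finset.mem_image_of_mem Prod.snd hp
    rw [dif_pos hmem, dif_pos hmem] at this
    have hv : v ⟨p.2, hmem⟩ = v' ⟨p.2, hmem⟩ := Fin.ext this
    subst hpj
    exact hv
end

section
/- Let k ≥ 1 and let x : Fin(2k−1) → ℚ be injective (i.e., x₀,…,x_{2k−2} are 2k−1 distinct evaluation points). Let p and q be polynomials over ℚ each of degree at most k−1, and let V be the (2k−1)×(2k−1) Vandermonde matrix with entries V_{ij} = x_iʲ for 0 ≤ i,j ≤ 2k−2. Then V is invertible, and the vector w = V⁻¹ · ( p(x₀)q(x₀), …, p(x_{2k−2})q(x_{2k−2}) )ᵀ satisfies w_i = (the coefficient of xⁱ in p·q) for all 0 ≤ i ≤ 2k−2; equivalently, for every z ∈ ℚ, Σ_{i=0}^{2k−2} w_i zⁱ = p(z)·q(z). -/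
open Matrix Polynomial

/-- Correctness of the Evaluation/Interpolation/Recomposition steps of the Toom-k
scheme: for `2k−1` distinct evaluation points, the Vandermonde matrix is invertible,
and applying its inverse to the vector of evaluations `p(x_i)·q(x_i)` recovers the
coefficients of the product polynomial `p·q`; equivalently, these recovered
coefficients re-evaluate to `p(z)·q(z)` at every point `z`. -/
theorem stmt_12 (k : ℕ) (hk : 1 ≤ k) (x : Fin (2 * k - 1) → ℚ)
    (hx : Function.Injective x)
    (p q : Polynomial ℚ) (hp : p.degree ≤ (k - 1 : ℕ)) (hq : q.degree ≤ (k - 1 : ℕ)) :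
    IsUnit (Matrix.vandermonde x) ∧
    (∀ i : Fin (2 * k - 1),
      ((Matrix.vandermonde x)⁻¹ *ᵥ (fun j => p.eval (x j) * q.eval (x j))) i
        = (p * q).coeff (i : ℕ)) ∧
    (∀ z : ℚ,
      ∑ i : Fin (2 * k - 1),
        ((Matrix.vandermonde x)⁻¹ *ᵥ (fun j => p.eval (x j) * q.eval (x j))) i
          * z ^ (i : ℕ)
        = p.eval z * q.eval z) := by
  have hdet : (Matrix.vandermonde x).det ≠ 0 :=
    Matrix.det_vandermonde_ne_zero_iff.mpr hx
  have hunit : IsUnit (Matrix.vandermonde x) := by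
    rw [Matrix.isUnit_iff_isUnit_det, isUnit_iff_ne_zero]
    exact hdet
  have hnd : (p * q).natDegree < 2 * k - 1 := by
    have hp' : p.natDegree ≤ k - 1 := Polynomial.natDegree_le_iff_degree_le.mpr hp
    have hq' : q.natDegree ≤ k - 1 := Polynomial.natDegree_le_iff_degree_le.mpr hq
    have := Polynomial.natDegree_mul_le (p := p) (q := q)
    omega
  have heval : ∀ z : ℚ, (p * q).eval z =
      ∑ i : Fin (2 * k - 1), (p * q).coeff (i : ℕ) * z ^ (i : ℕ) := by
    intro z
    rw [Polynomial.eval_eq_sum_range' hnd, Fin.sum_univ_eq_sum_range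
      (fun i => (p * q).coeff i * z ^ i)]
  have hmv : Matrix.vandermonde x *ᵥ (fun i => (p * q).coeff (i : ℕ))
      = fun j => p.eval (x j) * q.eval (x j) := by
    funext j
    simp only [Matrix.mulVec, dotProduct, Matrix.vandermonde_apply]
    rw [← Polynomial.eval_mul, heval (x j)]
    exact Finset.sum_congr rfl (fun i _ => mul_comm _ _)
  have hkey : (Matrix.vandermonde x)⁻¹ *ᵥ (fun j => p.eval (x j) * q.eval (x j))
      = fun i : Fin (2 * k - 1) => (p * q).coeff (i : ℕ) := by
    rw [← hmv, Matrix.mulVec_mulVec, Matrix.nonsing_inv_mul _ (isUnit_iff_ne_zero.mpr hdet), Matrix.one_mulVec]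
  refine ⟨hunit, fun i => by rw [hkey], fun z => ?_⟩
  rw [hkey, ← heval z, Polynomial.eval_mul]
end
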